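/- Let 0 ≠ M ∈ ⋀X and let V ⊆ X be a subspace with X = isp(M) ⊕ V. Then there exists a maximal tight blade factorization M = B∧N with N ∈ ⋀V, and it is unique up to scalars: if M = B∧N = B'∧N' are two maximal tight blade factorizations with N, N' ∈ ⋀V, then B' = λB and N' = λ^{-1}N for some nonzero scalar λ. -/

import Mathlib

/-!
Setup: `X` is a finite-dimensional real inner product space, `⋀X` its exterior
algebra.  We hypothesize a bilinear form `innE` on the exterior algebra which makes
the wedges of any orthonormal basis of `X` (over increasing index sets) orthonormal
— this characterizes the inner product of the paper — and a bilinear left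
contraction `lcontr` adjoint to the wedge product: `⟨M⌟N, L⟩ = ⟨N, M∧L⟩`.
-/

noncomputable section

open ExteriorAlgebra

/-- The wedge product `v_{i₁} ∧ ⋯ ∧ v_{i_p}` of the vectors `v i`, `i ∈ s`,
taken in increasing order of the indices. -/
def wedgeOf {X : Type*} [AddCommGroup X] [Module ℝ X] {n : ℕ}
    (v : Fin n → X) (s : Finset (Fin n)) : ExteriorAlgebra ℝ X :=
  ((s.sort (· ≤ ·)).map fun i => ι ℝ (v i)).prod

/-- The inner space `isp M = {v : v ∧ M = 0}`. -/
def isp {X : Type*} [AddCommGroup X] [Module ℝ X]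
    (M : ExteriorAlgebra ℝ X) : Submodule ℝ X where
  carrier := {x | ι ℝ x * M = 0}
  add_mem' := by
    intro a b ha hb
    simp only [Set.mem_setOf_eq, map_add, add_mul] at *
    rw [ha, hb, add_zero]
  zero_mem' := by simp
  smul_mem' := by
    intro c x hx
    simp only [Set.mem_setOf_eq, map_smul, smul_mul_assoc] at *
    rw [hx, smul_zero]

/-- The space `{v : v ⌟ M = 0}`, whose orthogonal complement is the outer space. -/
def ospKer {X : Type*} [NormedAddCommGroup X] [InnerProductSpace ℝ X]
    (lcontr : ExteriorAlgebra ℝ X →ₗ[ℝ] ExteriorAlgebra ℝ X →ₗ[ℝ] ExteriorAlgebra ℝ X)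
    (M : ExteriorAlgebra ℝ X) : Submodule ℝ X where
  carrier := {x | lcontr (ι ℝ x) M = 0}
  add_mem' := by
    intro a b ha hb
    simp only [Set.mem_setOf_eq, map_add, LinearMap.add_apply] at *
    rw [ha, hb, add_zero]
  zero_mem' := by simp
  smul_mem' := by
    intro c x hx
    simp only [Set.mem_setOf_eq, map_smul, LinearMap.smul_apply] at *
    rw [hx, smul_zero]

/-- The outer space `osp M = {v : v ⌟ M = 0}ᗮ`. -/
def osp {X : Type*} [NormedAddCommGroup X] [InnerProductSpace ℝ X]
    (lcontr : ExteriorAlgebra ℝ X →ₗ[ℝ] ExteriorAlgebra ℝ X →ₗ[ℝ] ExteriorAlgebra ℝ X)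
    (M : ExteriorAlgebra ℝ X) : Submodule ℝ X :=
  (ospKer lcontr M)ᗮ

/-- `innE` is the inner product of `⋀X`: for every orthonormal basis of `X`, the
wedges of basis vectors over increasing index sets form an orthonormal family. -/
def InnerOK {X : Type*} [NormedAddCommGroup X] [InnerProductSpace ℝ X]
    (innE : ExteriorAlgebra ℝ X →ₗ[ℝ] ExteriorAlgebra ℝ X →ₗ[ℝ] ℝ) : Prop :=
  ∀ (m : ℕ) (w : OrthonormalBasis (Fin m) ℝ X) (s t : Finset (Fin m)),
    innE (wedgeOf (⇑w) s) (wedgeOf (⇑w) t) = if s = t then 1 else 0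

/-- `lcontr` is the left contraction: `⟨M ⌟ N, L⟩ = ⟨N, M ∧ L⟩`. -/
def ContrOK {X : Type*} [NormedAddCommGroup X] [InnerProductSpace ℝ X]
    (innE : ExteriorAlgebra ℝ X →ₗ[ℝ] ExteriorAlgebra ℝ X →ₗ[ℝ] ℝ)
    (lcontr : ExteriorAlgebra ℝ X →ₗ[ℝ] ExteriorAlgebra ℝ X →ₗ[ℝ] ExteriorAlgebra ℝ X) :
    Prop :=
  ∀ M N L : ExteriorAlgebra ℝ X, innE (lcontr M N) L = innE N (M * L)


/-- The exterior product `v₁ ∧ ⋯ ∧ v_p` of a tuple of vectors. -/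
def bladeOf {X : Type*} [AddCommGroup X] [Module ℝ X] {p : ℕ}
    (f : Fin p → X) : ExteriorAlgebra ℝ X :=
  (List.ofFn fun i => ι ℝ (f i)).prod

/-- The subalgebra `⋀V` of `⋀X` generated by a subspace `V` of `X`. -/
def extSub {X : Type*} [AddCommGroup X] [Module ℝ X] (V : Submodule ℝ X) :
    Subalgebra ℝ (ExteriorAlgebra ℝ X) :=
  Algebra.adjoin ℝ ((ι ℝ : X →ₗ[ℝ] ExteriorAlgebra ℝ X) '' (V : Set X))

theorem List.eq_of_perm_of_sorted {α : Type*} {r : α → α → Prop} [IsAntisymm α r]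
    {l₁ l₂ : List α} (hp : l₁.Perm l₂) (h1 : l₁.Pairwise r) (h2 : l₂.Pairwise r) : l₁ = l₂ :=
  List.Perm.eq_of_pairwise' h1 h2 hp

theorem Finset.sort_sorted_lt {α : Type*} [LinearOrder α] (s : Finset α) :
    (s.sort (· ≤ ·)).Pairwise (· < ·) :=
  (Finset.sortedLT_sort s).pairwise

section Lemmas0

variable {X : Type*} [AddCommGroup X] [Module ℝ X] {n : ℕ}

lemma ι_swap (x y : X) : ι ℝ x * ι ℝ y = -(ι ℝ y * ι ℝ x) := by
  have h := ι_add_mul_swap (R := ℝ) x y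
  rw [eq_neg_of_add_eq_zero_left h]

lemma prod_mul_ι (l : List X) (x : X) :
    (l.map (ι ℝ)).prod * ι ℝ x = ((-1:ℝ))^l.length • (ι ℝ x * (l.map (ι ℝ)).prod) := by
  induction l with
  | nil => simp
  | cons a t ih =>
    simp only [List.map_cons, List.prod_cons, List.length_cons, mul_assoc, ih, pow_succ,
      mul_smul_comm]
    rw [← mul_assoc, ← mul_assoc, ι_swap a x, neg_mul, smul_neg, mul_neg_one, neg_smul,
      ]

-- sorted split lemmas
lemma sort_split_notmem (s : Finset (Fin n)) (i : Fin n) (hi : i ∉ s) :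
    s.sort (· ≤ ·) = (s.filter (· < i)).sort (· ≤ ·) ++ (s.filter (i < ·)).sort (· ≤ ·) := by
  haveI : IsAntisymm (Fin n) (· < ·) := ⟨fun a b h h' => absurd (h.trans h') (lt_irrefl a)⟩
  refine List.eq_of_perm_of_sorted (r := ((· < ·) : Fin n → Fin n → Prop)) ?_ ?_ ?_
  · apply List.perm_of_nodup_nodup_toFinset_eq (Finset.sort_nodup _ _)
    · rw [List.nodup_append]
      refine ⟨Finset.sort_nodup _ _, Finset.sort_nodup _ _, ?_⟩
      intro a ha _ hb rfl
      rw [Finset.mem_sort] at ha hb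
      exact absurd ((Finset.mem_filter.1 ha).2.trans (Finset.mem_filter.1 hb).2) (lt_irrefl a)
    · ext a
      simp only [List.mem_toFinset, List.mem_append, Finset.mem_sort, Finset.mem_filter]
      constructor
      · intro ha
        rcases lt_trichotomy a i with h | h | h
        · exact Or.inl ⟨ha, h⟩
        · exact absurd (h ▸ ha) hi
        · exact Or.inr ⟨ha, h⟩
      · rintro (⟨h, _⟩ | ⟨h, _⟩) <;> exact h
  · exact Finset.sort_sorted_lt s
  · refine List.pairwise_append.2 ⟨Finset.sort_sorted_lt _, Finset.sort_sorted_lt _, ?_⟩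
    intro a ha b hb
    rw [Finset.mem_sort] at ha hb
    exact ((Finset.mem_filter.1 ha).2).trans (Finset.mem_filter.1 hb).2

lemma sort_split_mem (s : Finset (Fin n)) (i : Fin n) (hi : i ∈ s) :
    s.sort (· ≤ ·) = (s.filter (· < i)).sort (· ≤ ·) ++ i :: (s.filter (i < ·)).sort (· ≤ ·) := by
  haveI : IsAntisymm (Fin n) (· < ·) := ⟨fun a b h h' => absurd (h.trans h') (lt_irrefl a)⟩
  refine List.eq_of_perm_of_sorted (r := ((· < ·) : Fin n → Fin n → Prop)) ?_ ?_ ?_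
  · apply List.perm_of_nodup_nodup_toFinset_eq (Finset.sort_nodup _ _)
    · rw [List.nodup_append]
      refine ⟨Finset.sort_nodup _ _, List.nodup_cons.2 ⟨?_, Finset.sort_nodup _ _⟩, ?_⟩
      · intro h
        rw [Finset.mem_sort, Finset.mem_filter] at h
        exact lt_irrefl i h.2
      · intro a ha _ hb rfl
        rw [Finset.mem_sort] at ha
        have hai := (Finset.mem_filter.1 ha).2
        rcases List.mem_cons.1 hb with rfl | hb
        · exact lt_irrefl a hai
        · rw [Finset.mem_sort] at hb
          exact absurd (hai.trans (Finset.mem_filter.1 hb).2) (lt_irrefl a)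
    · ext a
      simp only [List.mem_toFinset, List.mem_append, List.mem_cons, Finset.mem_sort,
        Finset.mem_filter]
      constructor
      · intro ha
        rcases lt_trichotomy a i with h | h | h
        · exact Or.inl ⟨ha, h⟩
        · exact Or.inr (Or.inl h)
        · exact Or.inr (Or.inr ⟨ha, h⟩)
      · rintro (⟨h, _⟩ | rfl | ⟨h, _⟩) <;> first | exact h | exact hi
  · exact Finset.sort_sorted_lt s
  · refine List.pairwise_append.2 ⟨Finset.sort_sorted_lt _, ?_, ?_⟩
    · refine List.pairwise_cons.2 ⟨?_, Finset.sort_sorted_lt _⟩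
      intro b hb
      rw [Finset.mem_sort] at hb
      exact (Finset.mem_filter.1 hb).2
    · intro a ha b hb
      rw [Finset.mem_sort] at ha
      have hai := (Finset.mem_filter.1 ha).2
      rcases List.mem_cons.1 hb with rfl | hb
      · exact hai
      · rw [Finset.mem_sort] at hb
        exact hai.trans (Finset.mem_filter.1 hb).2

lemma ι_mul_prod (l : List X) (x : X) :
    ι ℝ x * (l.map (ι ℝ)).prod = ((-1:ℝ))^l.length • ((l.map (ι ℝ)).prod * ι ℝ x) := by
  rw [prod_mul_ι, smul_smul, ← pow_add]
  rw [Even.neg_one_pow ⟨l.length, rfl⟩, one_smul]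

lemma map_ι_comp (v : Fin n → X) (l : List (Fin n)) :
    l.map (fun i => ι ℝ (v i)) = (l.map v).map (ι ℝ) := by
  rw [List.map_map]; rfl

@[simp] lemma wedgeOf_empty (v : Fin n → X) : wedgeOf v ∅ = 1 := by
  simp [wedgeOf]

@[simp] lemma wedgeOf_singleton (v : Fin n → X) (i : Fin n) : wedgeOf v {i} = ι ℝ (v i) := by
  simp [wedgeOf, Finset.sort_singleton]

lemma ι_mul_wedgeOf_mem (v : Fin n → X) {s : Finset (Fin n)} {i : Fin n} (hi : i ∈ s) :
    ι ℝ (v i) * wedgeOf v s = 0 := by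
  unfold wedgeOf
  rw [sort_split_mem s i hi, List.map_append, List.map_cons, List.prod_append, List.prod_cons,
    map_ι_comp, map_ι_comp, ← mul_assoc, ι_mul_prod]
  rw [smul_mul_assoc, mul_assoc, ← mul_assoc (ι ℝ (v i)), ι_sq_zero, zero_mul, mul_zero,
    smul_zero]

lemma filter_lt_insert (s : Finset (Fin n)) (i : Fin n) :
    (insert i s).filter (· < i) = s.filter (· < i) := by
  ext a
  simp only [Finset.mem_filter, Finset.mem_insert]
  constructor
  · rintro ⟨rfl | h, h2⟩
    · exact absurd h2 (lt_irrefl a)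
    · exact ⟨h, h2⟩
  · rintro ⟨h, h2⟩; exact ⟨Or.inr h, h2⟩

lemma filter_gt_insert (s : Finset (Fin n)) (i : Fin n) :
    (insert i s).filter (i < ·) = s.filter (i < ·) := by
  ext a
  simp only [Finset.mem_filter, Finset.mem_insert]
  constructor
  · rintro ⟨rfl | h, h2⟩
    · exact absurd h2 (lt_irrefl a)
    · exact ⟨h, h2⟩
  · rintro ⟨h, h2⟩; exact ⟨Or.inr h, h2⟩

lemma ι_mul_wedgeOf_notmem (v : Fin n → X) {s : Finset (Fin n)} {i : Fin n} (hi : i ∉ s) :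
    ι ℝ (v i) * wedgeOf v s
      = ((-1:ℝ))^((s.filter (· < i)).card) • wedgeOf v (insert i s) := by
  unfold wedgeOf
  rw [sort_split_notmem s i hi, sort_split_mem (insert i s) i (Finset.mem_insert_self i s),
    filter_lt_insert, filter_gt_insert]
  rw [List.map_append, List.map_append, List.map_cons, List.prod_append, List.prod_append,
    List.prod_cons, map_ι_comp, map_ι_comp, ← mul_assoc, ι_mul_prod]
  rw [List.length_map, Finset.length_sort, smul_mul_assoc, mul_assoc]

lemma wedgeOf_union (v : Fin n → X) {s t : Finset (Fin n)}
    (hst : ∀ a ∈ s, ∀ b ∈ t, a < b) :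
    wedgeOf v (s ∪ t) = wedgeOf v s * wedgeOf v t := by
  have key : (s ∪ t).sort (· ≤ ·) = s.sort (· ≤ ·) ++ t.sort (· ≤ ·) := by
    haveI : IsAntisymm (Fin n) (· < ·) := ⟨fun a b h h' => absurd (h.trans h') (lt_irrefl a)⟩
    refine List.eq_of_perm_of_sorted (r := ((· < ·) : Fin n → Fin n → Prop)) ?_ ?_ ?_
    · apply List.perm_of_nodup_nodup_toFinset_eq (Finset.sort_nodup _ _)
      · rw [List.nodup_append]
        refine ⟨Finset.sort_nodup _ _, Finset.sort_nodup _ _, ?_⟩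
        intro a ha _ hb rfl
        rw [Finset.mem_sort] at ha hb
        exact absurd (hst a ha a hb) (lt_irrefl a)
      · ext a
        simp only [List.mem_toFinset, List.mem_append, Finset.mem_sort, Finset.mem_union]
    · exact Finset.sort_sorted_lt _
    · refine List.pairwise_append.2 ⟨Finset.sort_sorted_lt _, Finset.sort_sorted_lt _, ?_⟩
      intro a ha b hb
      rw [Finset.mem_sort] at ha hb
      exact hst a ha b hb
  unfold wedgeOf
  rw [key, List.map_append, List.prod_append]

open Submodule in
lemma ι_mul_wedge_mem_span (v : Fin n → X) {x : X} (hx : x ∈ span ℝ (Set.range v))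
    (s : Finset (Fin n)) :
    ι ℝ x * wedgeOf v s ∈ span ℝ (Set.range (wedgeOf v)) := by
  have hle : span ℝ (Set.range v) ≤
      comap ((LinearMap.mulRight ℝ (wedgeOf v s)).comp (ι ℝ))
        (span ℝ (Set.range (wedgeOf v))) := by
    rw [span_le]
    rintro _ ⟨i, rfl⟩
    simp only [SetLike.mem_coe, mem_comap, LinearMap.comp_apply, LinearMap.mulRight_apply]
    by_cases hi : i ∈ s
    · rw [ι_mul_wedgeOf_mem v hi]; exact zero_mem _
    · rw [ι_mul_wedgeOf_notmem v hi]
      exact smul_mem _ _ (subset_span ⟨insert i s, rfl⟩)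
  exact hle hx

open Submodule in
lemma span_wedge_top (v : Fin n → X) (hv : ⊤ ≤ span ℝ (Set.range v)) :
    span ℝ (Set.range (wedgeOf v)) = ⊤ := by
  set P := span ℝ (Set.range (wedgeOf v)) with hP
  have hone : (1 : ExteriorAlgebra ℝ X) ∈ P := by
    have : wedgeOf v ∅ ∈ P := subset_span ⟨∅, rfl⟩
    rwa [wedgeOf_empty] at this
  have h1 : ∀ x : X, ∀ b ∈ P, ι ℝ x * b ∈ P := by
    intro x b hb
    have hle : P ≤ comap (LinearMap.mulLeft ℝ (ι ℝ x)) P := by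
      rw [hP, span_le]
      rintro _ ⟨s, rfl⟩
      simp only [SetLike.mem_coe, mem_comap, LinearMap.mulLeft_apply]
      exact ι_mul_wedge_mem_span v (hv trivial) s
    exact hle hb
  have hS : ∀ a : ExteriorAlgebra ℝ X, ∀ b ∈ P, a * b ∈ P := by
    intro a
    induction a using ExteriorAlgebra.induction with
    | algebraMap r => intro b hb; rw [← Algebra.smul_def]; exact smul_mem P r hb
    | ι x => exact h1 x
    | mul a c ha hc => intro b hb; rw [mul_assoc]; exact ha _ (hc _ hb)
    | add a c ha hc => intro b hb; rw [add_mul]; exact add_mem (ha _ hb) (hc _ hb)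
  rw [eq_top_iff]
  intro a _
  have := hS a 1 hone
  rwa [mul_one] at this


end Lemmas0

section Lemmas1

open Submodule

variable {X : Type*} [NormedAddCommGroup X] [InnerProductSpace ℝ X]
  (innE : ExteriorAlgebra ℝ X →ₗ[ℝ] ExteriorAlgebra ℝ X →ₗ[ℝ] ℝ)

lemma wedge_indep (hinn : InnerOK innE) {m : ℕ} (w : OrthonormalBasis (Fin m) ℝ X) :
    LinearIndependent ℝ (wedgeOf (⇑w)) := by
  rw [Fintype.linearIndependent_iff]
  intro g hg t
  have h := congrArg (fun z => innE z (wedgeOf (⇑w) t)) hg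
  simp only [map_sum, map_smul, LinearMap.sum_apply, LinearMap.smul_apply, map_zero,
    LinearMap.zero_apply, smul_eq_mul] at h
  rw [Finset.sum_congr rfl (fun s _ => by rw [hinn m w s t])] at h
  simpa using h

/-- The basis of wedges attached to an orthonormal basis. -/
def wedgeBasis (hinn : InnerOK innE) {m : ℕ} (w : OrthonormalBasis (Fin m) ℝ X) :
    Module.Basis (Finset (Fin m)) ℝ (ExteriorAlgebra ℝ X) :=
  Module.Basis.mk (wedge_indep innE hinn w)
    (by
      have hsp : ⊤ ≤ Submodule.span ℝ (Set.range ⇑w) := by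
        rw [← w.coe_toBasis]
        exact w.toBasis.span_eq.ge
      rw [span_wedge_top (⇑w) hsp])

@[simp] lemma wedgeBasis_apply (hinn : InnerOK innE) {m : ℕ}
    (w : OrthonormalBasis (Fin m) ℝ X) (s : Finset (Fin m)) :
    wedgeBasis innE hinn w s = wedgeOf (⇑w) s := by
  simp [wedgeBasis]

lemma finrank_ext [FiniteDimensional ℝ X] (hinn : InnerOK innE) :
    Module.finrank ℝ (ExteriorAlgebra ℝ X) = 2 ^ (Module.finrank ℝ X) := by
  rw [Module.finrank_eq_card_basis (wedgeBasis innE hinn (stdOrthonormalBasis ℝ X))]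
  simp [Fintype.card_finset]

/-- Nondegeneracy of `innE` against wedges of an orthonormal basis. -/
lemma eq_zero_of_innE (hinn : InnerOK innE) {m : ℕ} (w : OrthonormalBasis (Fin m) ℝ X)
    {z : ExteriorAlgebra ℝ X} (h : ∀ t, innE z (wedgeOf (⇑w) t) = 0) : z = 0 := by
  set B := wedgeBasis innE hinn w
  have hz : z = ∑ s : Finset (Fin m), B.repr z s • wedgeOf (⇑w) s := by
    conv_lhs => rw [← B.sum_repr z]
    exact Finset.sum_congr rfl fun s _ => by rw [wedgeBasis_apply]
  have hc : ∀ t, B.repr z t = 0 := by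
    intro t
    have := h t
    rw [hz, map_sum] at this
    simp only [map_smul, LinearMap.sum_apply, LinearMap.smul_apply, smul_eq_mul] at this
    rw [Finset.sum_congr rfl (fun s _ => by rw [hinn m w s t])] at this
    simpa using this
  rw [hz]
  simp [hc]

/-- The basis of wedges attached to any spanning family of the right size. -/
def wedgeBasisOf [FiniteDimensional ℝ X] (hinn : InnerOK innE) {m : ℕ} (v : Fin m → X)
    (hv : ⊤ ≤ span ℝ (Set.range v)) (hm : m = Module.finrank ℝ X) :
    Module.Basis (Finset (Fin m)) ℝ (ExteriorAlgebra ℝ X) :=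
  basisOfTopLeSpanOfCardEqFinrank (wedgeOf v) (span_wedge_top v hv).ge
    (by rw [Fintype.card_finset, finrank_ext innE hinn, hm, Fintype.card_fin])

@[simp] lemma wedgeBasisOf_apply [FiniteDimensional ℝ X] (hinn : InnerOK innE) {m : ℕ}
    (v : Fin m → X) (hv : ⊤ ≤ span ℝ (Set.range v)) (hm : m = Module.finrank ℝ X)
    (s : Finset (Fin m)) :
    wedgeBasisOf innE hinn v hv hm s = wedgeOf v s := by
  simp [wedgeBasisOf]

end Lemmas1

section LemmasZ

open Submodule

variable {X : Type*} [AddCommGroup X] [Module ℝ X] {n : ℕ}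

lemma wedgeOf_mem_extSub (v : Fin n → X) (V : Submodule ℝ X) {G s : Finset (Fin n)}
    (hG : ∀ j ∈ G, v j ∈ V) (hs : s ⊆ G) : wedgeOf v s ∈ extSub V := by
  unfold wedgeOf
  apply Subalgebra.list_prod_mem
  intro x hx
  simp only [List.mem_map, Finset.mem_sort] at hx
  obtain ⟨i, hi, rfl⟩ := hx
  exact Algebra.subset_adjoin ⟨v i, hG i (hs hi), rfl⟩

lemma mem_span_of_mem_extSub (v : Fin n → X) (V : Submodule ℝ X) (G : Finset (Fin n))
    (hVG : (V : Set X) ⊆ (span ℝ (v '' ↑G) : Set X))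
    {N : ExteriorAlgebra ℝ X} (hN : N ∈ extSub V) :
    N ∈ span ℝ (wedgeOf v '' {s : Finset (Fin n) | s ⊆ G}) := by
  set P := span ℝ (wedgeOf v '' {s : Finset (Fin n) | s ⊆ G}) with hP
  have hone : (1 : ExteriorAlgebra ℝ X) ∈ P := by
    have : wedgeOf v ∅ ∈ P := subset_span ⟨∅, by simp, rfl⟩
    rwa [wedgeOf_empty] at this
  have step0 : ∀ i ∈ G, ∀ b ∈ P, ι ℝ (v i) * b ∈ P := by
    intro i hi b hb
    have hle : P ≤ comap (LinearMap.mulLeft ℝ (ι ℝ (v i))) P := by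
      rw [hP, span_le]
      rintro _ ⟨s, hs, rfl⟩
      simp only [Set.mem_setOf_eq] at hs
      simp only [SetLike.mem_coe, mem_comap, LinearMap.mulLeft_apply]
      by_cases his : i ∈ s
      · rw [ι_mul_wedgeOf_mem v his]; exact zero_mem _
      · rw [ι_mul_wedgeOf_notmem v his]
        exact smul_mem _ _ (subset_span ⟨insert i s, Finset.insert_subset hi hs, rfl⟩)
    exact hle hb
  have step1 : ∀ x ∈ V, ∀ b ∈ P, ι ℝ x * b ∈ P := by
    intro x hx b hb
    have hle : span ℝ (v '' ↑G) ≤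
        comap ((LinearMap.mulRight ℝ b).comp (ι ℝ)) P := by
      rw [span_le]
      rintro _ ⟨i, hi, rfl⟩
      simp only [SetLike.mem_coe, mem_comap, LinearMap.comp_apply, LinearMap.mulRight_apply]
      exact step0 i hi b hb
    exact hle (hVG hx)
  have step2 : ∀ s : Finset (Fin n), s ⊆ G → ∀ b ∈ P, wedgeOf v s * b ∈ P := by
    intro s
    induction s using Finset.induction_on with
    | empty => intro _ b hb; rw [wedgeOf_empty, one_mul]; exact hb
    | insert _ _ his =>
      rename_i i s ih
      intro hsub b hb
      have hiG : i ∈ G := hsub (Finset.mem_insert_self i s)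
      have hsG : s ⊆ G := fun a ha => hsub (Finset.mem_insert_of_mem ha)
      have key : wedgeOf v (insert i s)
          = ((-1:ℝ))^((s.filter (· < i)).card) • (ι ℝ (v i) * wedgeOf v s) := by
        rw [ι_mul_wedgeOf_notmem v his, smul_smul, ← pow_add,
          Even.neg_one_pow ⟨_, rfl⟩, one_smul]
      rw [key, smul_mul_assoc, mul_assoc]
      exact smul_mem _ _ (step0 i hiG _ (ih hsG b hb))
  let S : Subalgebra ℝ (ExteriorAlgebra ℝ X) :=
    P.toSubalgebra hone (fun a b ha hb => by
      have hle : P ≤ comap (LinearMap.mulRight ℝ b) P := by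
        rw [hP, span_le]
        rintro _ ⟨s, hs, rfl⟩
        simp only [Set.mem_setOf_eq] at hs
        simp only [SetLike.mem_coe, mem_comap, LinearMap.mulRight_apply]
        exact step2 s hs b hb
      exact hle ha)
  have hadj : extSub V ≤ S := by
    apply Algebra.adjoin_le
    rintro _ ⟨x, hx, rfl⟩
    show ι ℝ x ∈ P
    have := step1 x hx 1 hone
    rwa [mul_one] at this
  exact hadj hN

lemma sort_filter_lt (p q : ℕ) :
    ((Finset.univ.filter (fun i : Fin (p+q) => i.val < p)).sort (· ≤ ·))
      = (List.finRange p).map (Fin.castAdd q) := by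
  haveI : IsAntisymm (Fin (p+q)) (· < ·) := ⟨fun a b h h' => absurd (h.trans h') (lt_irrefl a)⟩
  refine List.eq_of_perm_of_sorted (r := ((· < ·) : Fin (p+q) → Fin (p+q) → Prop)) ?_ ?_ ?_
  · apply List.perm_of_nodup_nodup_toFinset_eq (Finset.sort_nodup _ _)
    · exact (List.nodup_finRange p).map (Fin.castAdd_injective _ _)
    · ext a
      simp only [List.mem_toFinset, Finset.mem_sort, Finset.mem_filter, Finset.mem_univ,
        true_and, List.mem_map, List.mem_finRange]
      constructor
      · intro ha
        exact ⟨⟨a.val, ha⟩, Fin.ext (by simp)⟩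
      · rintro ⟨i, rfl⟩
        simpa using i.isLt
  · exact Finset.sort_sorted_lt _
  · exact List.pairwise_map.2
      ((List.pairwise_lt_finRange p).imp (fun h => by
        rw [Fin.lt_def, Fin.coe_castAdd, Fin.coe_castAdd]; exact h))

lemma wedgeOf_append_filter_lt {p q : ℕ} (f : Fin p → X) (g : Fin q → X) :
    wedgeOf (Fin.append f g) (Finset.univ.filter (fun i : Fin (p+q) => i.val < p))
      = bladeOf f := by
  unfold wedgeOf bladeOf
  rw [sort_filter_lt p q, List.map_map, List.ofFn_eq_map]
  congr 1
  apply List.map_congr_left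
  intro i _
  simp only [Function.comp_apply, Fin.append_left]

-- MARKER

end LemmasZ

section LemmasW

open Submodule

variable {X : Type*} [NormedAddCommGroup X] [InnerProductSpace ℝ X] [FiniteDimensional ℝ X]
  (innE : ExteriorAlgebra ℝ X →ₗ[ℝ] ExteriorAlgebra ℝ X →ₗ[ℝ] ℝ)

lemma repr_eq_zero_of_mul_zero (hinn : InnerOK innE) {m : ℕ}
    (u : Fin m → X) (hv : ⊤ ≤ span ℝ (Set.range u)) (hm : m = Module.finrank ℝ X)
    {M : ExteriorAlgebra ℝ X} {i : Fin m} (hiM : ι ℝ (u i) * M = 0)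
    {s : Finset (Fin m)} (his : i ∉ s) :
    (wedgeBasisOf innE hinn u hv hm).repr M s = 0 := by
  set B := wedgeBasisOf innE hinn u hv hm with hB
  have hM : M = ∑ t : Finset (Fin m), B.repr M t • wedgeOf u t := by
    conv_lhs => rw [← B.sum_repr M]
    exact Finset.sum_congr rfl fun t _ => by rw [wedgeBasisOf_apply]
  have h0 : (0 : ExteriorAlgebra ℝ X)
      = ∑ t : Finset (Fin m), B.repr M t • (ι ℝ (u i) * wedgeOf u t) := by
    calc (0 : ExteriorAlgebra ℝ X) = ι ℝ (u i) * M := hiM.symm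
    _ = _ := by
      conv_lhs => rw [hM]
      rw [Finset.mul_sum]
      exact Finset.sum_congr rfl fun t _ => (mul_smul_comm _ _ _)
  have h1 := congrArg (fun z => B.repr z (insert i s)) h0
  simp only [map_zero, map_sum, map_smul, Finsupp.coe_zero, Pi.zero_apply,
    Finset.sum_apply', Finsupp.smul_apply, smul_eq_mul] at h1
  rw [Finset.sum_eq_single s ?_ (by simp)] at h1
  · rw [ι_mul_wedgeOf_notmem u his] at h1
    have : B.repr (((-1:ℝ)) ^ (Finset.filter (· < i) s).card • wedgeOf u (insert i s))
        (insert i s) = ((-1:ℝ)) ^ (Finset.filter (· < i) s).card := by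
      rw [map_smul, ← wedgeBasisOf_apply innE hinn u hv hm, ← hB, B.repr_self,
        Finsupp.smul_apply, Finsupp.single_apply, if_pos rfl, smul_eq_mul, mul_one]
    rw [this] at h1
    have hε : ((-1:ℝ)) ^ (Finset.filter (· < i) s).card ≠ 0 := by
      exact pow_ne_zero _ (by norm_num)
    have h2 : (wedgeBasisOf innE hinn u hv hm).repr M s
        * ((-1:ℝ)) ^ (Finset.filter (· < i) s).card = 0 := h1.symm
    rcases mul_eq_zero.mp h2 with h | h
    · exact h
    · exact absurd h hε
  · intro t _ hts
    by_cases hit : i ∈ t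
    · rw [ι_mul_wedgeOf_mem u hit, map_zero, Finsupp.coe_zero, Pi.zero_apply, mul_zero]
    · rw [ι_mul_wedgeOf_notmem u hit, map_smul, ← wedgeBasisOf_apply innE hinn u hv hm, ← hB,
        B.repr_self, Finsupp.smul_apply, Finsupp.single_apply]
      have : insert i t ≠ insert i s := by
        intro h
        apply hts
        rw [← Finset.erase_insert hit, ← Finset.erase_insert his, h]
      rw [if_neg this]
      simp
lemma wedge_mul_cancel (hinn : InnerOK innE) {p q : ℕ} (u : Fin (p+q) → X)
    (hv : ⊤ ≤ span ℝ (Set.range u)) (hm : p + q = Module.finrank ℝ X)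
    {K : ExteriorAlgebra ℝ X}
    (hK : K ∈ span ℝ (wedgeOf u ''
      {s : Finset (Fin (p+q)) | s ⊆ Finset.univ.filter (fun i => p ≤ i.val)}))
    (h0 : wedgeOf u (Finset.univ.filter (fun i : Fin (p+q) => i.val < p)) * K = 0) :
    K = 0 := by
  classical
  set U : Finset (Fin (p+q)) := Finset.univ.filter (fun i => p ≤ i.val) with hU
  set P : Finset (Fin (p+q)) := Finset.univ.filter (fun i => i.val < p) with hPdef
  set B := wedgeBasisOf innE hinn u hv hm with hB
  have himg : wedgeOf u '' {s : Finset (Fin (p+q)) | s ⊆ U} = ⇑B '' {s | s ⊆ U} := by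
    apply Set.image_congr
    intro s _
    rw [hB, wedgeBasisOf_apply]
  rw [himg] at hK
  have hsupp : ↑(B.repr K).support ⊆ {s : Finset (Fin (p+q)) | s ⊆ U} :=
    B.mem_span_image.1 hK
  have hKsum : K = ∑ s ∈ U.powerset, B.repr K s • wedgeOf u s := by
    conv_lhs => rw [← B.sum_repr K]
    rw [Finset.sum_subset (Finset.subset_univ U.powerset)]
    · exact Finset.sum_congr rfl fun t _ => by rw [wedgeBasisOf_apply]
    · intro t _ ht
      have : t ∉ (B.repr K).support := by
        intro hmem
        exact ht (Finset.mem_powerset.2 (hsupp hmem))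
      rw [Finsupp.notMem_support_iff.1 this, zero_smul]
  have hlt : ∀ s ∈ U.powerset, ∀ a ∈ P, ∀ b ∈ s, a < b := by
    intro s hs a ha b hb
    rw [Finset.mem_powerset] at hs
    have hb' := hs hb
    rw [hPdef, Finset.mem_filter] at ha
    rw [hU, Finset.mem_filter] at hb'
    rw [Fin.lt_def]
    exact lt_of_lt_of_le ha.2 hb'.2
  have hprod : (0 : ExteriorAlgebra ℝ X)
      = ∑ s ∈ U.powerset, B.repr K s • wedgeOf u (P ∪ s) := by
    calc (0 : ExteriorAlgebra ℝ X) = wedgeOf u P * K := h0.symm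
    _ = _ := by
      conv_lhs => rw [hKsum]
      rw [Finset.mul_sum]
      refine Finset.sum_congr rfl fun s hs => ?_
      rw [mul_smul_comm, wedgeOf_union u (hlt s hs)]
  have hinj : ∀ s ∈ U.powerset, ∀ t ∈ U.powerset, P ∪ s = P ∪ t → s = t := by
    intro s hs t ht hst
    rw [Finset.mem_powerset] at hs ht
    ext a
    constructor
    · intro ha
      have haU := hs ha
      have : a ∈ P ∪ t := hst ▸ Finset.mem_union_right P ha
      rcases Finset.mem_union.1 this with h | h
      · rw [hPdef, Finset.mem_filter] at h
        rw [hU, Finset.mem_filter] at haU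
        omega
      · exact h
    · intro ha
      have haU := ht ha
      have : a ∈ P ∪ s := hst ▸ Finset.mem_union_right P ha
      rcases Finset.mem_union.1 this with h | h
      · rw [hPdef, Finset.mem_filter] at h
        rw [hU, Finset.mem_filter] at haU
        omega
      · exact h
  have hcoeff : ∀ t ∈ U.powerset, B.repr K t = 0 := by
    intro t ht
    have h1 := congrArg (fun z => B.repr z (P ∪ t)) hprod
    simp only [map_zero, map_sum, map_smul, Finsupp.coe_zero, Pi.zero_apply,
      Finset.sum_apply', Finsupp.smul_apply, smul_eq_mul] at h1
    rw [Finset.sum_eq_single_of_mem t ht ?_] at h1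
    · rw [← wedgeBasisOf_apply innE hinn u hv hm (P ∪ t), ← hB, B.repr_self,
        Finsupp.single_apply, if_pos rfl, mul_one] at h1
      exact h1.symm
    · intro s hs hst
      rw [← wedgeBasisOf_apply innE hinn u hv hm (P ∪ s), ← hB, B.repr_self,
        Finsupp.single_apply]
      rw [if_neg (fun h => hst (hinj s hs t ht h)), mul_zero]
  rw [hKsum]
  refine Finset.sum_eq_zero fun s hs => ?_
  rw [hcoeff s hs, zero_smul]

lemma osp_le_of_mem_extSub (hinn : InnerOK innE)
    (lcontr : ExteriorAlgebra ℝ X →ₗ[ℝ] ExteriorAlgebra ℝ X →ₗ[ℝ] ExteriorAlgebra ℝ X)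
    (hc : ContrOK innE lcontr) (V : Submodule ℝ X)
    {N : ExteriorAlgebra ℝ X} (hN : N ∈ extSub V) :
    osp lcontr N ≤ V := by
  classical
  set q := Module.finrank ℝ V with hq
  set r := Module.finrank ℝ ↥Vᗮ with hr
  let oV := stdOrthonormalBasis ℝ V
  let oW := stdOrthonormalBasis ℝ ↥Vᗮ
  let h : Fin q ⊕ Fin r → X := Sum.elim (fun i => (oV i : X)) (fun j => (oW j : X))
  have horth : Orthonormal ℝ h := by
    rw [orthonormal_iff_ite]
    rintro (i | i) (j | j)
    · have := orthonormal_iff_ite.1 oV.orthonormal i j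
      simpa [h, Submodule.coe_inner] using this
    · have h0 : inner ℝ (h (Sum.inl i)) (h (Sum.inr j)) = (0:ℝ) := by
        have := (oW j).2
        rw [Submodule.mem_orthogonal] at this
        exact this _ (oV i).2
      simp only [h0, h]
      simp
    · have h0 : inner ℝ (h (Sum.inr i)) (h (Sum.inl j)) = (0:ℝ) := by
        rw [real_inner_comm]
        have := (oW i).2
        rw [Submodule.mem_orthogonal] at this
        exact this _ (oV j).2
      simp only [h0, h]
      simp
    · have := orthonormal_iff_ite.1 oW.orthonormal i j
      simpa [h, Submodule.coe_inner] using this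
  have hmapV : span ℝ (⇑V.subtype '' Set.range ⇑oV) = V := by
    rw [← Submodule.map_span, ← oV.coe_toBasis, oV.toBasis.span_eq, Submodule.map_top,
      Submodule.range_subtype]
  have hmapW : span ℝ (⇑Vᗮ.subtype '' Set.range ⇑oW) = Vᗮ := by
    rw [← Submodule.map_span, ← oW.coe_toBasis, oW.toBasis.span_eq, Submodule.map_top,
      Submodule.range_subtype]
  have hspan : ⊤ ≤ span ℝ (Set.range h) := by
    rw [Set.Sum.elim_range, span_union]
    have h1 : Set.range (fun i => ((oV i : X))) = ⇑V.subtype '' Set.range ⇑oV := by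
      rw [← Set.range_comp]; rfl
    have h2 : Set.range (fun j => ((oW j : X))) = ⇑Vᗮ.subtype '' Set.range ⇑oW := by
      rw [← Set.range_comp]; rfl
    rw [h1, h2, hmapV, hmapW]
    exact (Submodule.isCompl_orthogonal_of_hasOrthogonalProjection (K := V)).codisjoint.eq_top.ge
  let w0 : OrthonormalBasis (Fin q ⊕ Fin r) ℝ X := OrthonormalBasis.mk horth hspan
  let w : OrthonormalBasis (Fin (q+r)) ℝ X := w0.reindex finSumFinEquiv
  set G : Finset (Fin (q+r)) := Finset.univ.filter (fun i => i.val < q) with hG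
  have hwl : ∀ j : Fin q, w (finSumFinEquiv (Sum.inl j)) = (oV j : X) := by
    intro j
    rw [OrthonormalBasis.reindex_apply, Equiv.symm_apply_apply]
    simp [w0, h]
  have hwr : ∀ j : Fin r, w (finSumFinEquiv (Sum.inr j)) = (oW j : X) := by
    intro j
    rw [OrthonormalBasis.reindex_apply, Equiv.symm_apply_apply]
    simp [w0, h]
  have hVle : (V : Set X) ⊆ (span ℝ (⇑w '' ↑G) : Set X) := by
    intro x hx
    rw [← hmapV] at hx
    refine span_mono ?_ hx
    rintro _ ⟨_, ⟨j, rfl⟩, rfl⟩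
    refine ⟨finSumFinEquiv (Sum.inl j), ?_, hwl j⟩
    simp only [hG, Finset.coe_filter, Set.mem_setOf_eq, Finset.mem_univ, true_and,
      finSumFinEquiv_apply_left, Fin.coe_castAdd]
    exact j.isLt
  have hWle : (Vᗮ : Set X) ⊆ (span ℝ (⇑w '' ↑(Gᶜ)) : Set X) := by
    intro x hx
    rw [← hmapW] at hx
    refine span_mono ?_ hx
    rintro _ ⟨_, ⟨j, rfl⟩, rfl⟩
    refine ⟨finSumFinEquiv (Sum.inr j), ?_, hwr j⟩
    simp only [Finset.coe_compl, Set.mem_compl_iff, Finset.mem_coe, hG, Finset.mem_filter,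
      Finset.mem_univ, true_and, finSumFinEquiv_apply_right, Fin.coe_natAdd]
    omega
  have hker : Vᗮ ≤ ospKer lcontr N := by
    intro x hx
    have hx' : x ∈ span ℝ (⇑w '' ↑(Gᶜ)) := hWle hx
    have hzero : lcontr (ι ℝ x) N = 0 := by
      apply eq_zero_of_innE innE hinn w
      intro t
      rw [hc]
      have hgen : ∀ y ∈ ⇑w '' ↑(Gᶜ), innE N (ι ℝ y * wedgeOf ⇑w t) = 0 := by
        rintro _ ⟨j, hj, rfl⟩
        simp only [Finset.coe_compl, Set.mem_compl_iff, Finset.mem_coe, hG,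
          Finset.mem_filter, Finset.mem_univ, true_and, not_lt] at hj
        by_cases hjt : j ∈ t
        · rw [ι_mul_wedgeOf_mem _ hjt, map_zero]
        · rw [ι_mul_wedgeOf_notmem _ hjt, map_smul, smul_eq_mul]
          have hNs := mem_span_of_mem_extSub ⇑w V G hVle hN
          have hle2 : span ℝ (wedgeOf ⇑w '' {s : Finset (Fin (q+r)) | s ⊆ G})
              ≤ LinearMap.ker (innE.flip (wedgeOf ⇑w (insert j t))) := by
            rw [span_le]
            rintro _ ⟨s, hsG, rfl⟩
            simp only [SetLike.mem_coe, LinearMap.mem_ker, LinearMap.flip_apply]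
            rw [hinn _ w s (insert j t), if_neg]
            intro hst
            have : j ∈ s := hst ▸ Finset.mem_insert_self j t
            have := hsG this
            rw [hG, Finset.mem_filter] at this
            omega
          have := hle2 hNs
          rw [LinearMap.mem_ker, LinearMap.flip_apply] at this
          rw [this, mul_zero]
      have hle3 : span ℝ (⇑w '' ↑(Gᶜ)) ≤ LinearMap.ker
          ((innE N).comp ((LinearMap.mulRight ℝ (wedgeOf ⇑w t)).comp (ι ℝ))) := by
        rw [span_le]
        intro y hy
        simp only [SetLike.mem_coe, LinearMap.mem_ker, LinearMap.comp_apply,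
          LinearMap.mulRight_apply]
        exact hgen y hy
      have := hle3 hx'
      rw [LinearMap.mem_ker] at this
      simpa using this
    exact hzero
  have hfinal : (ospKer lcontr N)ᗮ ≤ Vᗮᗮ := Submodule.orthogonal_le hker
  rw [Submodule.orthogonal_orthogonal] at hfinal
  exact hfinal

lemma top_le_span_append {p q : ℕ} (f : Fin p → X) (g : Fin q → X)
    (h : ⊤ ≤ span ℝ (Set.range f) ⊔ span ℝ (Set.range g)) :
    ⊤ ≤ span ℝ (Set.range (Fin.append f g)) := by
  refine h.trans (sup_le ?_ ?_) <;> refine span_le.2 ?_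
  · rintro _ ⟨i, rfl⟩
    exact subset_span ⟨Fin.castAdd q i, Fin.append_left f g i⟩
  · rintro _ ⟨i, rfl⟩
    exact subset_span ⟨Fin.natAdd p i, Fin.append_right f g i⟩

lemma span_range_val {k : ℕ} {W : Submodule ℝ X} (b : Module.Basis (Fin k) ℝ W) :
    span ℝ (Set.range (fun i => (b i : X))) = W := by
  have h1 : Set.range (fun i => ((b i : X))) = ⇑W.subtype '' Set.range ⇑b := by
    rw [← Set.range_comp]; rfl
  rw [h1, ← Submodule.map_span, b.span_eq, Submodule.map_top, Submodule.range_subtype]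

lemma bladeOf_eq_ιMulti {p : ℕ} (f : Fin p → X) : bladeOf f = ιMulti ℝ p f :=
  (ιMulti_apply f).symm

lemma bladeOf_eq_zero_of_dep {p : ℕ} (f : Fin p → X) (h : ¬ LinearIndependent ℝ f) :
    bladeOf f = 0 := by
  rw [bladeOf_eq_ιMulti]
  exact AlternatingMap.map_linearDependent (ιMulti ℝ p) f h

-- MARKER2

end LemmasW


/-- Existence and uniqueness up to scalars of the maximal tight
blade factorization `M = B ∧ N` with `N ∈ ⋀V`, for each complement `V` of `isp M`. -/
theorem maximal_tight_factorization {X : Type*} [NormedAddCommGroup X]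
    [InnerProductSpace ℝ X] [FiniteDimensional ℝ X]
    (innE : ExteriorAlgebra ℝ X →ₗ[ℝ] ExteriorAlgebra ℝ X →ₗ[ℝ] ℝ)
    (lcontr : ExteriorAlgebra ℝ X →ₗ[ℝ] ExteriorAlgebra ℝ X →ₗ[ℝ] ExteriorAlgebra ℝ X)
    (hinn : InnerOK innE) (hc : ContrOK innE lcontr)
    (M : ExteriorAlgebra ℝ X) (hM0 : M ≠ 0)
    (V : Submodule ℝ X) (hV : IsCompl (isp M) V) :
    -- existence of a maximal tight blade factorization with N ∈ ⋀V
    (∃ (c : ℝ) (p : ℕ) (f : Fin p → X) (N : ExteriorAlgebra ℝ X),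
      c • bladeOf f ≠ 0 ∧ M = (c • bladeOf f) * N ∧ N ∈ extSub V ∧
      Disjoint (osp lcontr N) (Submodule.span ℝ (Set.range f)) ∧
      Submodule.span ℝ (Set.range f) = isp M) ∧
    -- uniqueness up to scalars
    (∀ (c : ℝ) (p : ℕ) (f : Fin p → X) (N : ExteriorAlgebra ℝ X)
        (c' : ℝ) (p' : ℕ) (f' : Fin p' → X) (N' : ExteriorAlgebra ℝ X),
      c • bladeOf f ≠ 0 → M = (c • bladeOf f) * N → N ∈ extSub V →
      Disjoint (osp lcontr N) (Submodule.span ℝ (Set.range f)) →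
      Submodule.span ℝ (Set.range f) = isp M →
      c' • bladeOf f' ≠ 0 → M = (c' • bladeOf f') * N' → N' ∈ extSub V →
      Disjoint (osp lcontr N') (Submodule.span ℝ (Set.range f')) →
      Submodule.span ℝ (Set.range f') = isp M →
      ∃ lam : ℝ, lam ≠ 0 ∧ c' • bladeOf f' = lam • (c • bladeOf f) ∧
        N' = lam⁻¹ • N) := by
  classical
  constructor
  · -- existence
    set p := Module.finrank ℝ (isp M) with hp
    set q := Module.finrank ℝ V with hq
    let bI : Module.Basis (Fin p) ℝ (isp M) := Module.finBasis ℝ (isp M)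
    let bV : Module.Basis (Fin q) ℝ V := Module.finBasis ℝ V
    let f : Fin p → X := fun i => (bI i : X)
    let g : Fin q → X := fun j => (bV j : X)
    let u : Fin (p+q) → X := Fin.append f g
    have hspf : Submodule.span ℝ (Set.range f) = isp M := span_range_val bI
    have hspg : Submodule.span ℝ (Set.range g) = V := span_range_val bV
    have hm : p + q = Module.finrank ℝ X := Submodule.finrank_add_eq_of_isCompl hV
    have hv : ⊤ ≤ Submodule.span ℝ (Set.range u) := by
      apply top_le_span_append
      rw [hspf, hspg]
      exact hV.codisjoint.eq_top.ge
    have huI : ∀ i : Fin (p+q), i.val < p → u i ∈ isp M := by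
      intro i hi
      have hieq : i = Fin.castAdd q ⟨i.val, hi⟩ := Fin.ext rfl
      rw [hieq]
      show Fin.append f g _ ∈ _
      rw [Fin.append_left]
      exact (bI _).2
    have huV : ∀ i : Fin (p+q), p ≤ i.val → u i ∈ V := by
      intro i hi
      have hieq : i = Fin.natAdd p ⟨i.val - p, by omega⟩ := Fin.ext (by simp; omega)
      rw [hieq]
      show Fin.append f g _ ∈ _
      rw [Fin.append_right]
      exact (bV _).2
    set B := wedgeBasisOf innE hinn u hv hm with hB
    set P : Finset (Fin (p+q)) := Finset.univ.filter (fun i => i.val < p) with hP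
    have hP0 : ∀ s : Finset (Fin (p+q)), ¬ P ⊆ s → B.repr M s = 0 := by
      intro s hs
      obtain ⟨i, hiP, his⟩ := Finset.not_subset.1 hs
      rw [hP, Finset.mem_filter] at hiP
      have hmul : ι ℝ (u i) * M = 0 := huI i hiP.2
      exact repr_eq_zero_of_mul_zero innE hinn u hv hm hmul his
    set N : ExteriorAlgebra ℝ X :=
      ∑ s : Finset (Fin (p+q)), B.repr M s • wedgeOf u (s \ P) with hN
    have hMsum : M = ∑ s : Finset (Fin (p+q)), B.repr M s • wedgeOf u s := by
      conv_lhs => rw [← B.sum_repr M]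
      exact Finset.sum_congr rfl fun t _ => by rw [hB, wedgeBasisOf_apply]
    have hMN : M = wedgeOf u P * N := by
      rw [hN, Finset.mul_sum]
      conv_lhs => rw [hMsum]
      refine Finset.sum_congr rfl fun s _ => ?_
      rw [mul_smul_comm]
      by_cases hPs : P ⊆ s
      · congr 1
        rw [← wedgeOf_union u ?_, Finset.union_sdiff_of_subset hPs]
        intro a ha b hb
        rw [hP, Finset.mem_filter] at ha
        rw [Finset.mem_sdiff] at hb
        have hbP := hb.2
        rw [hP, Finset.mem_filter] at hbP
        rw [Fin.lt_def]
        simp only [Finset.mem_univ, true_and, not_lt] at hbP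
        exact lt_of_lt_of_le ha.2 hbP
      · rw [hP0 s hPs, zero_smul, zero_smul]
    have hNV : N ∈ extSub V := by
      rw [hN]
      refine Subalgebra.sum_mem _ fun s _ => Subalgebra.smul_mem _ ?_ _
      refine wedgeOf_mem_extSub u V (G := Finset.univ.filter (fun i => p ≤ i.val)) ?_ ?_
      · intro j hj
        rw [Finset.mem_filter] at hj
        exact huV j hj.2
      · intro a ha
        rw [Finset.mem_sdiff] at ha
        have := ha.2
        rw [hP, Finset.mem_filter] at this
        simp only [Finset.mem_univ, true_and, not_lt] at this
        rw [Finset.mem_filter]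
        exact ⟨Finset.mem_univ a, this⟩
    have hblade : wedgeOf u P = bladeOf f := by
      rw [hP]
      exact wedgeOf_append_filter_lt f g
    have hBne : bladeOf f ≠ 0 := by
      rw [← hblade]
      have : wedgeOf u P = B P := by rw [hB, wedgeBasisOf_apply]
      rw [this]
      exact B.ne_zero P
    refine ⟨1, p, f, N, ?_, ?_, hNV, ?_, ?_⟩
    · rw [one_smul]; exact hBne
    · rw [one_smul, ← hblade]; exact hMN
    · rw [hspf]
      exact Disjoint.mono_left (osp_le_of_mem_extSub innE hinn lcontr hc V hNV)
        hV.disjoint.symm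
    · exact hspf
  · -- uniqueness
    intro c p f N c' p' f' N' hcB hMN hNV hdisj hspan hcB' hMN' hNV' hdisj' hspan'
    have hc0 : c ≠ 0 := fun h => hcB (by rw [h, zero_smul])
    have hc0' : c' ≠ 0 := fun h => hcB' (by rw [h, zero_smul])
    have hb0 : bladeOf f ≠ 0 := fun h => hcB (by rw [h, smul_zero])
    have hb0' : bladeOf f' ≠ 0 := fun h => hcB' (by rw [h, smul_zero])
    have hfind : LinearIndependent ℝ f := by
      by_contra h
      exact hb0 (bladeOf_eq_zero_of_dep f h)
    have hfind' : LinearIndependent ℝ f' := by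
      by_contra h
      exact hb0' (bladeOf_eq_zero_of_dep f' h)
    have hpp : p = Module.finrank ℝ (isp M) := by
      rw [← hspan, finrank_span_eq_card hfind, Fintype.card_fin]
    have hpp' : p' = Module.finrank ℝ (isp M) := by
      rw [← hspan', finrank_span_eq_card hfind', Fintype.card_fin]
    obtain rfl : p = p' := hpp.trans hpp'.symm
    -- codomain restrictions
    let fI : Fin p → isp M := fun i => ⟨f i, hspan ▸ Submodule.subset_span ⟨i, rfl⟩⟩
    let fI' : Fin p → isp M := fun i => ⟨f' i, hspan' ▸ Submodule.subset_span ⟨i, rfl⟩⟩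
    have hindI : LinearIndependent ℝ fI :=
      LinearIndependent.of_comp (isp M).subtype hfind
    have hindI' : LinearIndependent ℝ fI' :=
      LinearIndependent.of_comp (isp M).subtype hfind'
    have hspI : ⊤ ≤ Submodule.span ℝ (Set.range fI) := by
      have hmap : Submodule.map (isp M).subtype (Submodule.span ℝ (Set.range fI))
          = Submodule.map (isp M).subtype ⊤ := by
        rw [Submodule.map_span, Submodule.map_top, Submodule.range_subtype, ← Set.range_comp]
        exact hspan
      exact (Submodule.map_injective_of_injective (isp M).injective_subtype hmap).ge
    have hspI' : ⊤ ≤ Submodule.span ℝ (Set.range fI') := by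
      have hmap : Submodule.map (isp M).subtype (Submodule.span ℝ (Set.range fI'))
          = Submodule.map (isp M).subtype ⊤ := by
        rw [Submodule.map_span, Submodule.map_top, Submodule.range_subtype, ← Set.range_comp]
        exact hspan'
      exact (Submodule.map_injective_of_injective (isp M).injective_subtype hmap).ge
    let eI : Module.Basis (Fin p) ℝ (isp M) := Module.Basis.mk hindI hspI
    -- the alternating map
    let F : (isp M) [⋀^Fin p]→ₗ[ℝ] ExteriorAlgebra ℝ X :=
      (ιMulti ℝ p).compLinearMap (isp M).subtype
    have hFfI : F fI = bladeOf f := by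
      rw [AlternatingMap.compLinearMap_apply, ← bladeOf_eq_ιMulti]
      rfl
    have hFfI' : F fI' = bladeOf f' := by
      rw [AlternatingMap.compLinearMap_apply, ← bladeOf_eq_ιMulti]
      rfl
    let G : (isp M) [⋀^Fin p]→ₗ[ℝ] ExteriorAlgebra ℝ X :=
      (LinearMap.toSpanSingleton ℝ _ (F fI)).compAlternatingMap eI.det
    have hGapp : ∀ v : Fin p → isp M, G v = eI.det v • F fI := fun v => rfl
    have hFG : F = G := by
      apply Module.Basis.ext_alternating eI
      intro v hvinj
      have hvbij : Function.Bijective v := (Finite.injective_iff_bijective).1 hvinj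
      let σ : Equiv.Perm (Fin p) := Equiv.ofBijective v hvbij
      have hcoe : (fun i => eI (v i)) = ⇑eI ∘ σ := rfl
      rw [hcoe, F.map_perm, G.map_perm]
      congr 1
      rw [hGapp, Module.Basis.det_self, one_smul]
      congr 1
      rw [show ⇑eI = fI from Module.Basis.coe_mk _ _]
    have hdet : bladeOf f' = eI.det fI' • bladeOf f := by
      rw [← hFfI', hFG, hGapp, hFfI]
    set d : ℝ := eI.det fI' with hd
    have hd0 : d ≠ 0 := by
      intro h
      rw [hdet, h, zero_smul] at hb0'
      exact hb0' rfl
    set lam : ℝ := (c' * d) / c with hlam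
    have hlam0 : lam ≠ 0 := div_ne_zero (mul_ne_zero hc0' hd0) hc0
    have hlc : lam * c = c' * d := by
      rw [hlam, div_mul_cancel₀ _ hc0]
    have hsm : c' • bladeOf f' = lam • (c • bladeOf f) := by
      rw [hdet, smul_smul, smul_smul, hlc]
    -- the difference K
    set K : ExteriorAlgebra ℝ X := N - lam • N' with hK
    have hKV : K ∈ extSub V := by
      rw [hK]
      exact sub_mem hNV (Subalgebra.smul_mem _ hNV' lam)
    have hBK : (c • bladeOf f) * K = 0 := by
      have hM2 : M = lam • ((c • bladeOf f) * N') := by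
        rw [← smul_mul_assoc, ← hsm]
        exact hMN'
      rw [hK, mul_sub, ← hMN, mul_smul_comm, ← hM2, sub_self]
    have hbladeK : bladeOf f * K = 0 := by
      have := hBK
      rw [smul_mul_assoc] at this
      exact (smul_eq_zero.1 this).resolve_left hc0
    -- kill K with the combined basis
    set q := Module.finrank ℝ V with hq
    let bV : Module.Basis (Fin q) ℝ V := Module.finBasis ℝ V
    let g : Fin q → X := fun j => (bV j : X)
    let u : Fin (p+q) → X := Fin.append f g
    have hspg : Submodule.span ℝ (Set.range g) = V := span_range_val bV
    have hm : p + q = Module.finrank ℝ X := by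
      rw [hpp, hq]
      exact Submodule.finrank_add_eq_of_isCompl hV
    have hv : ⊤ ≤ Submodule.span ℝ (Set.range u) := by
      apply top_le_span_append
      rw [hspan, hspg]
      exact hV.codisjoint.eq_top.ge
    have hVG : (V : Set X) ⊆ (Submodule.span ℝ
        (u '' ↑(Finset.univ.filter (fun i : Fin (p+q) => p ≤ i.val))) : Set X) := by
      intro x hx
      rw [← hspg] at hx
      refine Submodule.span_mono ?_ hx
      rintro _ ⟨j, rfl⟩
      refine ⟨Fin.natAdd p j, ?_, Fin.append_right f g j⟩
      simp only [Finset.coe_filter, Set.mem_setOf_eq, Finset.mem_univ, true_and,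
        Fin.coe_natAdd]
      omega
    have hKspan : K ∈ Submodule.span ℝ (wedgeOf u ''
        {s : Finset (Fin (p+q)) | s ⊆ Finset.univ.filter (fun i => p ≤ i.val)}) :=
      mem_span_of_mem_extSub u V _ hVG hKV
    have hwedge : wedgeOf u (Finset.univ.filter (fun i : Fin (p+q) => i.val < p)) * K = 0 := by
      rw [wedgeOf_append_filter_lt f g]
      exact hbladeK
    have hK0 : K = 0 := wedge_mul_cancel innE hinn u hv hm hKspan hwedge
    have hNN : N = lam • N' := by
      have := hK0
      rw [hK, sub_eq_zero] at this
      exact this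
    refine ⟨lam, hlam0, hsm, ?_⟩
    rw [hNN, inv_smul_smul₀ hlam0]



end
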